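/- The quantity c(x,y) = (1+x²+y²)/(2y) is invariant under the rotation action: for all z, if (x',y') = R_z((x,y)−(0,c(x,y))) + (0,c(x,y)) and y' > 0, then c(x',y') = c(x,y). -/

import Mathlib

theorem stmt13 (x y z : ℝ) (hy : 0 < y)
    (x' y' : ℝ)
    (hx' : x' = Real.cos z * x - Real.sin z * (y - (1 + x^2 + y^2)/(2*y)))
    (hy' : y' = Real.sin z * x + Real.cos z * (y - (1 + x^2 + y^2)/(2*y))
        + (1 + x^2 + y^2)/(2*y))
    (hpos : 0 < y') :
    (1 + x'^2 + y'^2)/(2*y') = (1 + x^2 + y^2)/(2*y) := by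
  have hs := Real.sin_sq_add_cos_sq z
  have key : (1 + x'^2 + y'^2) * (2*y) = (1 + x^2 + y^2) * (2*y') := by
    subst hx' hy'
    field_simp
    linear_combination ((x*(2*y))^2 + (y*(2*y) - (1+x^2+y^2))^2) * hs
  rw [div_eq_div_iff (by linarith) (by linarith)]
  linarith [key]
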